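/- Let {φ_n}, {ψ_n} be biorthogonal bases of H contained in a dense subspace D, with distinct positive reals α_k, and let X = Σ_k α_k(ψ_k ⊗ φ̄_k) with D ⊆ D(X). Suppose S, T are operators on D with Sφ₀ = 0. Then the following are equivalent: (1) X*(Tφ_n) = α_{n+1}(Tφ_n) for all n; (2) for every n there exists γ_n ∈ ℂ with Tφ_n = γ_n φ_{n+1}; (3) for every n there exists β_n ∈ ℂ with T*ψ_n = β_n ψ_{n−1} (β₀ = 0, T* denoting the adjoint restricted to D). Moreover β_n = conjugate(γ_{n−1}) for n ≥ 1. -/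

import Mathlib

open scoped ComplexInnerProductSpace ComplexConjugate

/-- Proposition 4.3: for `S, T` satisfying the nonlinear weak commutation relation with
`Sφ₀ = 0` and the `α_k`'s all distinct, the following are equivalent:
(1) `X*(Tφ_n) = α_{n+1}(Tφ_n)` for all `n`;
(2) `Tφ_n = γ_n φ_{n+1}` for some constants `γ_n`;
(3) `T†ψ_n = β_n ψ_{n-1}` for some constants `β_n` with `β₀ = 0`.
Moreover `β_n = conj (γ_{n-1})` for `n ≥ 1`. -/
theorem nonlinear_CR_raising_equivalences
    {H : Type*} [NormedAddCommGroup H] [InnerProductSpace ℂ H] [CompleteSpace H]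
    (D : Submodule ℂ H) (hD : Dense (D : Set H))
    (φ ψ : ℕ → H) (hφD : ∀ n, φ n ∈ D) (hψD : ∀ n, ψ n ∈ D)
    (hbi : ∀ i j, ⟪φ i, ψ j⟫ = if i = j then (1 : ℂ) else 0)
    -- `{φ_n}` and `{ψ_n}` are biorthogonal (Schauder) bases
    (hexpφ : ∀ ξ : H, HasSum (fun k => ⟪ψ k, ξ⟫ • φ k) ξ)
    (hexpψ : ∀ ξ : H, HasSum (fun k => ⟪φ k, ξ⟫ • ψ k) ξ)
    (α : ℕ → ℝ) (hαpos : ∀ k, 0 < α k) (hαinj : Function.Injective α)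
    -- `X = Σ_k α_k (ψ_k ⊗ φ̄_k)` with `D ⊆ D(X)`
    (Xop : H → H)
    (hX : ∀ ξ ∈ D, HasSum (fun k => ((α k : ℂ) * ⟪φ k, ξ⟫) • ψ k) (Xop ξ))
    (S T Sadj Tadj : H →ₗ[ℂ] H)
    (hSadj : ∀ ξ ∈ D, ∀ η ∈ D, ⟪S ξ, η⟫ = ⟪ξ, Sadj η⟫)
    (hTadj : ∀ ξ ∈ D, ∀ η ∈ D, ⟪T ξ, η⟫ = ⟪ξ, Tadj η⟫)
    -- the nonlinear weak commutation relation
    (hCR : ∀ ξ ∈ D, ∀ η ∈ D, ⟪T ξ, Sadj η⟫ - ⟪S ξ, Tadj η⟫ = ⟪ξ, Xop η⟫)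
    (hS0 : S (φ 0) = 0) :
    -- (1) ↔ (2),  where `X* ξ = Σ_k α_k ⟨ξ, ψ_k⟩ φ_k`
    ((∀ n, HasSum (fun k => ((α k : ℂ) * ⟪ψ k, T (φ n)⟫) • φ k)
        ((α (n + 1) : ℂ) • T (φ n))) ↔
      (∀ n, ∃ γ : ℂ, T (φ n) = γ • φ (n + 1))) ∧
    -- (2) ↔ (3)
    ((∀ n, ∃ γ : ℂ, T (φ n) = γ • φ (n + 1)) ↔
      (∃ β : ℕ → ℂ, β 0 = 0 ∧ ∀ n, Tadj (ψ n) = β n • ψ (n - 1))) ∧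
    -- moreover `β_n = conj (γ_{n-1})`
    (∀ γ β : ℕ → ℂ, (∀ n, T (φ n) = γ n • φ (n + 1)) →
      (β 0 = 0 ∧ ∀ n, Tadj (ψ n) = β n • ψ (n - 1)) →
      ∀ n, 1 ≤ n → β n = conj (γ (n - 1))) := by
  -- ⟪ψ i, φ j⟫ from biorthogonality
  have hbi' : ∀ i j, ⟪ψ i, φ j⟫ = if j = i then (1 : ℂ) else 0 := by
    intro i j
    rw [← inner_conj_symm, hbi]
    split <;> simp
  -- a sum supported at a single index equals that term
  have single : ∀ (f : ℕ → H) (v : H) (m : ℕ), HasSum f v →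
      (∀ k, k ≠ m → f k = 0) → v = f m := by
    intro f v m hf h0
    have heq : f = fun k => if k = m then f m else 0 := by
      funext k
      by_cases h : k = m
      · simp [h]
      · simp [h, h0 k h]
    rw [heq] at hf
    exact hf.unique (hasSum_ite_eq m (f m))
  -- coefficient extraction for expansions in the φ basis
  have coefφ : ∀ (a : ℕ → ℂ) (v : H), HasSum (fun k => a k • φ k) v →
      ∀ j, ⟪ψ j, v⟫ = a j := by
    intro a v hv j
    have h1 := (innerSL ℂ (ψ j)).hasSum hv
    have h2 : (fun k => (innerSL ℂ (ψ j)) (a k • φ k))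
        = fun k => if k = j then a j else 0 := by
      funext k
      by_cases h : k = j <;> simp [inner_smul_right, hbi', h]
    rw [h2] at h1
    exact h1.unique (hasSum_ite_eq j (a j))
  refine ⟨⟨?_, ?_⟩, ⟨?_, ?_⟩, ?_⟩
  · -- (1) → (2)
    intro h1 n
    have hexp := hexpφ (T (φ n))
    have hscaled : HasSum (fun k => ((α (n+1) : ℂ) * ⟪ψ k, T (φ n)⟫) • φ k)
        ((α (n+1) : ℂ) • T (φ n)) := by
      have := hexp.const_smul ((α (n+1) : ℂ))
      simpa [smul_smul] using this
    have hzero : ∀ k, k ≠ n+1 → (⟪ψ k, T (φ n)⟫ : ℂ) = 0 := by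
      intro k hk
      have e1 := coefφ (fun k => (α k : ℂ) * ⟪ψ k, T (φ n)⟫) _ (h1 n) k
      have e2 := coefφ (fun k => (α (n+1) : ℂ) * ⟪ψ k, T (φ n)⟫) _ hscaled k
      have e3 : (α k : ℂ) * ⟪ψ k, T (φ n)⟫ = (α (n+1) : ℂ) * ⟪ψ k, T (φ n)⟫ :=
        e1.symm.trans e2
      have hαne : (α k : ℂ) ≠ (α (n+1) : ℂ) := fun h =>
        hk (hαinj (by exact_mod_cast h))
      have hmul : ((α k : ℂ) - (α (n+1) : ℂ)) * ⟪ψ k, T (φ n)⟫ = 0 := by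
        rw [sub_mul, e3, sub_self]
      rcases mul_eq_zero.mp hmul with h | h
      · exact absurd (sub_eq_zero.mp h) hαne
      · exact h
    refine ⟨⟪ψ (n+1), T (φ n)⟫, ?_⟩
    exact single _ _ (n+1) hexp (fun k hk => by rw [hzero k hk, zero_smul])
  · -- (2) → (1)
    intro h2 n
    obtain ⟨γ, hγ⟩ := h2 n
    have heq : (fun k => ((α k : ℂ) * ⟪ψ k, T (φ n)⟫) • φ k)
        = fun k => if k = n+1 then ((α (n+1) : ℂ) * γ) • φ (n+1) else 0 := by
      funext k
      rw [hγ, inner_smul_right, hbi']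
      by_cases h : k = n+1
      · subst h; simp
      · simp [Ne.symm h, h]
    rw [heq, hγ, smul_smul]
    exact hasSum_ite_eq _ _
  · -- (2) → (3)
    intro h2
    choose γ hγ using h2
    refine ⟨fun n => if n = 0 then 0 else conj (γ (n-1)), rfl, ?_⟩
    intro n
    have hexp := hexpψ (Tadj (ψ n))
    have hco : ∀ k, ⟪φ k, Tadj (ψ n)⟫ = if k + 1 = n then conj (γ k) else 0 := by
      intro k
      rw [← hTadj (φ k) (hφD k) (ψ n) (hψD n), hγ k, inner_smul_left, hbi]
      by_cases h : k + 1 = n <;> simp [h]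
    cases n with
    | zero =>
      have h := single _ _ 0 hexp (fun k _ => by rw [hco k]; simp)
      rw [h, hco 0]
      simp
    | succ m =>
      have h := single _ _ m hexp (fun k hk => by
        rw [hco k]
        simp [hk, show ¬(k + 1 = m + 1) from fun e => hk (Nat.succ_injective e)])
      rw [h, hco m]
      simp
  · -- (3) → (2)
    rintro ⟨β, hβ0, hβ⟩ n
    refine ⟨conj (β (n+1)), ?_⟩
    have hexp := hexpφ (T (φ n))
    have hco : ∀ k, ⟪ψ k, T (φ n)⟫ = if k = n+1 then conj (β (n+1)) else 0 := by
      intro k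
      rw [← inner_conj_symm, hTadj (φ n) (hφD n) (ψ k) (hψD k), hβ k,
        inner_smul_right, hbi]
      by_cases h : k = n + 1
      · subst h; simp
      · cases k with
        | zero => simp [hβ0, h]
        | succ m =>
          have hnm : n ≠ m := fun e => h (by omega)
          simp [h, hnm, Ne.symm hnm]
    have h := single _ _ (n+1) hexp (fun k hk => by rw [hco k]; simp [hk])
    rw [h, hco (n+1)]
    simp
  · -- moreover β_n = conj (γ_{n-1})
    intro γ β hγ hβ n hn
    obtain ⟨hβ0, hβ'⟩ := hβ
    have e1 : ⟪φ (n-1), Tadj (ψ n)⟫ = β n := by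
      rw [hβ' n, inner_smul_right, hbi]
      simp
    have e2 : ⟪φ (n-1), Tadj (ψ n)⟫ = conj (γ (n-1)) := by
      rw [← hTadj _ (hφD _) _ (hψD _), hγ (n-1), inner_smul_left,
        show n - 1 + 1 = n by omega, hbi]
      simp
    rw [← e1, e2]
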